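/- arXiv:2205.09378 — 5 statements merged into one kernel-verified Lean document; each statement's English description precedes it below -/
import Mathlib

section
/- Consider a two-user decode-and-forward relay network with L ≥ 1 hops and a fixed relay assignment. For i ∈ {1,2} and l ∈ {0,…,L−1}, user i transmits in hop l with power pᵢ(l) ∈ [0,P], where P > 0. For l ∈ {1,…,L}, with direct channel power gains hᵢ(l) > 0, cross-channel power gains g_{ji}(l) ≥ 0 (j ≠ i), and noise power σ² > 0, the SINR of user i in hop l is γᵢ(l) = pᵢ(l−1)·hᵢ(l)/(σ² + p_j(l−1)·g_{ji}(l)), and the achievable sum-rate is R(p₁,p₂) = log₂(1 + min_{1≤l≤L} γ₁(l)) + log₂(1 + min_{1≤l≤L} γ₂(l)). Then there exists a power allocation (p₁*, p₂*) ∈ [0,P]^L × [0,P]^L that maximizes R over [0,P]^L × [0,P]^L and for which the per-hop SINRs of each user are all equal: γ₁(l) = γ₁(1) and γ₂(l) = γ₂(1) for every l ∈ {1,…,L}. -/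
/-- SINR of user `i ∈ {0,1}` in hop `l` of a two-user multi-hop network:
`γᵢ(l) = pᵢ(l)·hᵢ(l)/(σ² + p_j(l)·g_{ji}(l))` where `j = i+1` is the other
user, `hᵢ(l)` is user `i`'s direct channel power gain in hop `l`, and `gᵢ(l)`
is the cross-channel power gain into user `i`'s receiver in hop `l`
(hops indexed so that `p(·,l)` is the transmit power used in hop `l+1`). -/
noncomputable def twoUserSINR (L : ℕ) (σ2 : ℝ) (h g : Fin 2 → Fin L → ℝ)
    (p : Fin 2 → Fin L → ℝ) (i : Fin 2) (l : Fin L) : ℝ :=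
  p i l * h i l / (σ2 + p (i + 1) l * g i l)

/-- Achievable sum-rate of the two-user decode-and-forward network:
`R(p) = Σᵢ log₂(1 + min over hops of γᵢ(l))`. -/
noncomputable def twoUserSumRate (L : ℕ) (σ2 : ℝ) (h g : Fin 2 → Fin L → ℝ)
    (p : Fin 2 → Fin L → ℝ) : ℝ :=
  ∑ i, Real.logb 2 (1 + ⨅ l, twoUserSINR L σ2 h g p i l)

lemma key_D (σ p1 p2 h1 h2 g1 g2 m1 m2 : ℝ)
    (hσ : 0 < σ) (hh1 : 0 < h1) (hh2 : 0 < h2) (hg1 : 0 ≤ g1) (hg2 : 0 ≤ g2)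
    (hp1 : 0 ≤ p1) (hp2 : 0 ≤ p2) (hm1 : 0 ≤ m1) (hm2 : 0 ≤ m2)
    (e1 : m1 * (σ + p2 * g1) ≤ p1 * h1)
    (e2 : m2 * (σ + p1 * g2) ≤ p2 * h2) :
    0 < h1 * h2 - m1 * m2 * g1 * g2 := by
  rcases eq_or_lt_of_le (by positivity : (0:ℝ) ≤ m1 * m2 * g1 * g2) with hz | hpos
  · nlinarith
  · have hm1' : 0 < m1 := by
      rcases hm1.lt_or_eq with h | h
      · exact h
      · exfalso; rw [← h] at hpos; simp at hpos
    have hm2' : 0 < m2 := by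
      rcases hm2.lt_or_eq with h | h
      · exact h
      · exfalso; rw [← h] at hpos; nlinarith
    have hp1' : 0 < p1 := by nlinarith [mul_pos hm1' hσ, mul_nonneg (mul_nonneg hm1 hp2) hg1]
    have hp2' : 0 < p2 := by nlinarith [mul_pos hm2' hσ, mul_nonneg (mul_nonneg hm2 hp1) hg2]
    have key : m1 * (σ + p2 * g1) * (m2 * (σ + p1 * g2)) ≤ p1 * h1 * (p2 * h2) := by
      apply mul_le_mul e1 e2 (by positivity) (by positivity)
    have h2' : p1 * p2 * (m1 * m2 * g1 * g2) < p1 * p2 * (h1 * h2) := by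
      nlinarith [mul_pos (mul_pos hm1' hm2') (mul_pos hσ hσ),
        mul_nonneg (mul_nonneg (mul_nonneg (mul_nonneg hm1 hm2) hσ.le) hp1) hg2,
        mul_nonneg (mul_nonneg (mul_nonneg (mul_nonneg hm1 hm2) hσ.le) hp2) hg1]
    nlinarith [mul_pos hp1' hp2']

lemma key (σ p1 p2 h1 h2 g1 g2 m1 m2 : ℝ)
    (hσ : 0 < σ) (hh1 : 0 < h1) (hh2 : 0 < h2) (hg1 : 0 ≤ g1) (hg2 : 0 ≤ g2)
    (hp1 : 0 ≤ p1) (hp2 : 0 ≤ p2) (hm1 : 0 ≤ m1) (hm2 : 0 ≤ m2)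
    (e1 : m1 * (σ + p2 * g1) ≤ p1 * h1)
    (e2 : m2 * (σ + p1 * g2) ≤ p2 * h2) :
    0 ≤ m1 * σ * (h2 + m2 * g1) / (h1 * h2 - m1 * m2 * g1 * g2) ∧
    m1 * σ * (h2 + m2 * g1) / (h1 * h2 - m1 * m2 * g1 * g2) ≤ p1 ∧
    (m1 * σ * (h2 + m2 * g1) / (h1 * h2 - m1 * m2 * g1 * g2)) * h1 /
      (σ + (m2 * σ * (h1 + m1 * g2) / (h2 * h1 - m2 * m1 * g2 * g1)) * g1) = m1 := by
  have hD : 0 < h1 * h2 - m1 * m2 * g1 * g2 :=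
    key_D σ p1 p2 h1 h2 g1 g2 m1 m2 hσ hh1 hh2 hg1 hg2 hp1 hp2 hm1 hm2 e1 e2
  have hD' : h2 * h1 - m2 * m1 * g2 * g1 = h1 * h2 - m1 * m2 * g1 * g2 := by ring
  have hq2 : 0 ≤ m2 * σ * (h1 + m1 * g2) / (h2 * h1 - m2 * m1 * g2 * g1) := by
    rw [hD']; positivity
  refine ⟨by positivity, ?_, ?_⟩
  · rw [div_le_iff₀ hD]
    nlinarith [mul_le_mul_of_nonneg_left e2 (mul_nonneg hm1 hg1),
      mul_le_mul_of_nonneg_right e1 hh2.le]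
  · have hden : 0 < σ + m2 * σ * (h1 + m1 * g2) / (h2 * h1 - m2 * m1 * g2 * g1) * g1 := by
      positivity
    rw [div_eq_iff hden.ne', hD']
    linear_combination (m1 * σ) * mul_inv_cancel₀ hD.ne'

/-- **Equal per-hop SINR at an optimum (Lemma 1).**
In a two-user decode-and-forward network with `L ≥ 1` hops, positive direct
gains, nonnegative cross gains, `σ² > 0` and `P > 0`, there exists a power
allocation in the box `[0,P]^{2×L}` that maximizes the achievable sum-rate over
the box and for which each user's per-hop SINRs are equal across all hops. -/
theorem exists_maximizer_with_equal_SINRs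
    (L : ℕ) (hL : 1 ≤ L) (σ2 P : ℝ) (hσ2 : 0 < σ2) (hP : 0 < P)
    (h g : Fin 2 → Fin L → ℝ)
    (hh : ∀ i l, 0 < h i l) (hg : ∀ i l, 0 ≤ g i l) :
    ∃ pstar : Fin 2 → Fin L → ℝ,
      (∀ i l, pstar i l ∈ Set.Icc (0 : ℝ) P) ∧
      (∀ p : Fin 2 → Fin L → ℝ, (∀ i l, p i l ∈ Set.Icc (0 : ℝ) P) →
        twoUserSumRate L σ2 h g p ≤ twoUserSumRate L σ2 h g pstar) ∧
      (∀ i l, twoUserSINR L σ2 h g pstar i l =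
        twoUserSINR L σ2 h g pstar i ⟨0, hL⟩) := by
  haveI : Nonempty (Fin L) := ⟨⟨0, hL⟩⟩
  set S : Set (Fin 2 → Fin L → ℝ) :=
    Set.univ.pi fun _ => Set.univ.pi fun _ => Set.Icc (0:ℝ) P with hSdef
  have hmem : ∀ p : Fin 2 → Fin L → ℝ,
      p ∈ S ↔ ∀ i l, p i l ∈ Set.Icc (0:ℝ) P := by
    intro p
    simp only [hSdef, Set.mem_univ_pi]
  have hcomp : IsCompact S :=
    isCompact_univ_pi fun _ => isCompact_univ_pi fun _ => isCompact_Icc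
  have hne : S.Nonempty := by
    refine ⟨fun _ _ => 0, (hmem _).mpr fun i l => ⟨le_rfl, hP.le⟩⟩
  -- basic positivity facts
  have hden : ∀ (p : Fin 2 → Fin L → ℝ), p ∈ S → ∀ (i : Fin 2) (l : Fin L),
      0 < σ2 + p (i+1) l * g i l := by
    intro p hp i l
    have := ((hmem p).mp hp (i+1) l).1
    have := hg i l
    positivity
  have hsinr_nonneg : ∀ (p : Fin 2 → Fin L → ℝ), p ∈ S → ∀ (i : Fin 2) (l : Fin L),
      0 ≤ twoUserSINR L σ2 h g p i l := by
    intro p hp i l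
    have h1 := ((hmem p).mp hp i l).1
    have h2 := (hh i l).le
    exact div_nonneg (mul_nonneg h1 h2) (hden p hp i l).le
  have hinf_nonneg : ∀ (p : Fin 2 → Fin L → ℝ), p ∈ S → ∀ i : Fin 2,
      0 ≤ ⨅ l, twoUserSINR L σ2 h g p i l := by
    intro p hp i
    exact le_ciInf fun l => hsinr_nonneg p hp i l
  -- continuity of the sum rate on S
  have hcont : ContinuousOn (twoUserSumRate L σ2 h g) S := by
    unfold twoUserSumRate
    apply continuousOn_finset_sum
    intro i _
    have hinfcont : ContinuousOn
        (fun p : Fin 2 → Fin L → ℝ => ⨅ l, twoUserSINR L σ2 h g p i l) S := by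
      simp only [← Finset.inf'_univ_eq_ciInf]
      apply ContinuousOn.finset_inf'_apply Finset.univ_nonempty
      intro l _
      unfold twoUserSINR
      apply ContinuousOn.div
      · exact ((continuous_apply_apply i l).mul
          continuous_const).continuousOn
      · exact (continuousOn_const.add
          (((continuous_apply_apply (i+1) l).mul
            continuous_const).continuousOn))
      · intro p hp
        exact (hden p hp i l).ne'
    have hpos : ∀ p ∈ S, (1 : ℝ) + ⨅ l, twoUserSINR L σ2 h g p i l ≠ 0 := by
      intro p hp
      have := hinf_nonneg p hp i
      positivity
    simp only [Real.logb]
    exact ((continuousOn_const.add hinfcont).log hpos).div_const _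
  obtain ⟨p0, hp0S, hp0max'⟩ := hcomp.exists_isMaxOn hne hcont
  have hp0max : ∀ p ∈ S, twoUserSumRate L σ2 h g p ≤ twoUserSumRate L σ2 h g p0 :=
    fun p hp => hp0max' hp
  -- the minimal SINRs of the maximizer
  set m : Fin 2 → ℝ := fun i => ⨅ l, twoUserSINR L σ2 h g p0 i l with hmdef
  have hm_nonneg : ∀ i, 0 ≤ m i := fun i => hinf_nonneg p0 hp0S i
  have hm_le : ∀ i l, m i ≤ twoUserSINR L σ2 h g p0 i l := by
    intro i l
    exact ciInf_le (Set.Finite.bddBelow (Set.finite_range _)) l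
  have hii : ∀ i : Fin 2, i + 1 + 1 = i := by decide
  have he : ∀ (i : Fin 2) (l : Fin L),
      m i * (σ2 + p0 (i+1) l * g i l) ≤ p0 i l * h i l := by
    intro i l
    have := hm_le i l
    unfold twoUserSINR at this
    exact (le_div_iff₀ (hden p0 hp0S i l)).mp this
  -- equalized power allocation
  set pstar : Fin 2 → Fin L → ℝ := fun i l =>
    m i * σ2 * (h (i+1) l + m (i+1) * g i l) /
      (h i l * h (i+1) l - m i * m (i+1) * g i l * g (i+1) l) with hpstardef
  have hkey : ∀ (i : Fin 2) (l : Fin L),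
      0 ≤ pstar i l ∧ pstar i l ≤ p0 i l ∧
      pstar i l * h i l / (σ2 + pstar (i+1) l * g i l) = m i := by
    intro i l
    have e2 := he (i+1) l
    rw [hii i] at e2
    have hk := key σ2 (p0 i l) (p0 (i+1) l) (h i l) (h (i+1) l) (g i l) (g (i+1) l)
      (m i) (m (i+1)) hσ2 (hh i l) (hh (i+1) l) (hg i l) (hg (i+1) l)
      ((hmem p0).mp hp0S i l).1 ((hmem p0).mp hp0S (i+1) l).1
      (hm_nonneg i) (hm_nonneg (i+1)) (he i l) e2
    simp only [hpstardef, hii i]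
    exact hk
  have hSINR_eq : ∀ (i : Fin 2) (l : Fin L), twoUserSINR L σ2 h g pstar i l = m i := by
    intro i l
    unfold twoUserSINR
    exact (hkey i l).2.2
  have hpstar_mem : ∀ i l, pstar i l ∈ Set.Icc (0:ℝ) P := by
    intro i l
    exact ⟨(hkey i l).1, (hkey i l).2.1.trans ((hmem p0).mp hp0S i l).2⟩
  have hrate : twoUserSumRate L σ2 h g pstar = twoUserSumRate L σ2 h g p0 := by
    unfold twoUserSumRate
    congr 1
    funext i
    rw [show (⨅ l, twoUserSINR L σ2 h g pstar i l) = m i by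
      simp only [hSINR_eq]; exact ciInf_const]
  refine ⟨pstar, hpstar_mem, ?_, ?_⟩
  · intro p hp
    rw [hrate]
    exact hp0max p ((hmem p).mpr hp)
  · intro i l
    rw [hSINR_eq i l, hSINR_eq i ⟨0, hL⟩]
end

section
/- Consider a two-user decode-and-forward relay network with L ≥ 1 hops and a fixed relay assignment. For i ∈ {1,2} and l ∈ {0,…,L−1}, user i transmits in hop l with power pᵢ(l) ∈ [0,P], where P > 0. For l ∈ {1,…,L}, with direct channel power gains hᵢ(l) > 0, cross-channel power gains g_{ji}(l) ≥ 0 (j ≠ i), and noise power σ² > 0, the SINR of user i in hop l is γᵢ(l) = pᵢ(l−1)·hᵢ(l)/(σ² + p_j(l−1)·g_{ji}(l)), and the achievable sum-rate is R(p₁,p₂) = log₂(1 + min_{1≤l≤L} γ₁(l)) + log₂(1 + min_{1≤l≤L} γ₂(l)). Then there exists a power allocation (p₁*, p₂*) ∈ [0,P]^L × [0,P]^L maximizing R over [0,P]^L × [0,P]^L such that (a) each user's per-hop SINRs are all equal across the L hops, and (b) at least two of the 2L transmit powers are binary, i.e., there exist two distinct pairs (i,l) ≠ (i′,l′) with p*ᵢ(l)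 ∈ {0,P} and p*ᵢ′(l′) ∈ {0,P}. -/
open Topology Filter

namespace BinPA

lemma fin2_ss (i : Fin 2) : i + 1 + 1 = i := by fin_cases i <;> rfl
lemma fin2_ne (i : Fin 2) : i + 1 ≠ i := by fin_cases i <;> decide
lemma fin2_mul (f : Fin 2 → ℝ) (i : Fin 2) : f 0 * f 1 = f i * f (i+1) := by
  fin_cases i <;> simp <;> ring
lemma fin2_eq_or (k i : Fin 2) : k = i ∨ k = i + 1 := by
  fin_cases k <;> fin_cases i <;> decide

lemma fin2_sum (f : Fin 2 → ℝ) (i : Fin 2) : ∑ k, f k = f i + f (i+1) := by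
  fin_cases i <;> simp [Fin.sum_univ_two] <;> ring

variable {L : ℕ} (σ2 P : ℝ) (h g : Fin 2 → Fin L → ℝ)

/-- denominator of the matched power formula -/
def Dq (m : Fin 2 → ℝ) (l : Fin L) : ℝ :=
  h 0 l * h 1 l - m 0 * m 1 * (g 0 l * g 1 l)

/-- matched ("SINR-balancing") power allocation realizing target SINRs `m` -/
noncomputable def q (m : Fin 2 → ℝ) (i : Fin 2) (l : Fin L) : ℝ :=
  m i * σ2 * (h (i+1) l + m (i+1) * g i l) / Dq h g m l

def ConLHS (m : Fin 2 → ℝ) (i : Fin 2) (l : Fin L) : ℝ :=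
  m i * σ2 * (h (i+1) l + m (i+1) * g i l) + P * (m 0 * m 1 * (g 0 l * g 1 l))

/-- feasibility constraint: `q i l ≤ P` in polynomial form -/
def Con (m : Fin 2 → ℝ) (i : Fin 2) (l : Fin L) : Prop :=
  ConLHS σ2 P h g m i l ≤ P * (h 0 l * h 1 l)

def F : Set (Fin 2 → ℝ) := {m | (∀ i, 0 ≤ m i) ∧ ∀ i l, Con σ2 P h g m i l}

noncomputable def G (m : Fin 2 → ℝ) : ℝ := ∑ i, Real.logb 2 (1 + m i)

section basic
variable (hσ2 : 0 < σ2) (hP : 0 < P) (hh : ∀ i l, 0 < h i l) (hg : ∀ i l, 0 ≤ g i l)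
include hσ2 hP hh hg

lemma num_nonneg {m : Fin 2 → ℝ} (hm : ∀ i, 0 ≤ m i) (i : Fin 2) (l : Fin L) :
    0 ≤ m i * σ2 * (h (i+1) l + m (i+1) * g i l) := by
  have := hh (i+1) l; have := hg i l; have := hm i; have := hm (i+1)
  positivity

lemma Dq_pos {m : Fin 2 → ℝ} (hm : m ∈ F σ2 P h g) (l : Fin L) :
    0 < Dq h g m l := by
  obtain ⟨hm0, hmc⟩ := hm
  have hc := hmc 0 l
  unfold Con ConLHS at hc
  have h01 : (0:Fin 2) + 1 = 1 := rfl
  rw [h01] at hc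
  have hprod : (0:ℝ) ≤ m 0 * m 1 * (g 0 l * g 1 l) := by
    have := hm0 0; have := hm0 1; have := hg 0 l; have := hg 1 l; positivity
  rcases eq_or_lt_of_le hprod with he | hlt
  · have := hh 0 l; have := hh 1 l
    simp only [Dq, ← he]
    nlinarith
  · have hm0p : 0 < m 0 := by
      by_contra h5
      push_neg at h5
      have h6 : m 0 = 0 := le_antisymm h5 (hm0 0)
      rw [h6] at hlt; simp at hlt
    have hnum : 0 < m 0 * σ2 * (h 1 l + m 1 * g 0 l) := by
      have := hh 1 l; have := hg 0 l; have := hm0 1; positivity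
    have h2 : P * (m 0 * m 1 * (g 0 l * g 1 l)) < P * (h 0 l * h 1 l) := by linarith
    have := (mul_lt_mul_iff_right₀ hP).mp h2
    unfold Dq; linarith

lemma q_nonneg {m : Fin 2 → ℝ} (hm : m ∈ F σ2 P h g) (i : Fin 2) (l : Fin L) :
    0 ≤ q σ2 h g m i l :=
  div_nonneg (num_nonneg σ2 P h g hσ2 hP hh hg hm.1 i l) (Dq_pos σ2 P h g hσ2 hP hh hg hm l).le

lemma q_le_P {m : Fin 2 → ℝ} (hm : m ∈ F σ2 P h g) (i : Fin 2) (l : Fin L) :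
    q σ2 h g m i l ≤ P := by
  have hD := Dq_pos σ2 P h g hσ2 hP hh hg hm l
  rw [q, div_le_iff₀ hD]
  have hc := hm.2 i l
  unfold Con ConLHS at hc; unfold Dq; linarith

lemma con_eq_iff_q_eq_P {m : Fin 2 → ℝ} (hm : m ∈ F σ2 P h g) (i : Fin 2) (l : Fin L)
    (he : ConLHS σ2 P h g m i l = P * (h 0 l * h 1 l)) : q σ2 h g m i l = P := by
  have hD := Dq_pos σ2 P h g hσ2 hP hh hg hm l
  rw [q, div_eq_iff hD.ne']
  unfold ConLHS at he
  unfold Dq; linarith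


omit hσ2 hP hh hg in
lemma q_denom (m : Fin 2 → ℝ) (i : Fin 2) (l : Fin L) (hD : Dq h g m l ≠ 0) :
    σ2 + q σ2 h g m (i+1) l * g i l
      = σ2 * (h i l) * (h (i+1) l + m (i+1) * g i l) / Dq h g m l := by
  have hss : i + 1 + 1 = i := fin2_ss i
  have hm2 : m 0 * g 0 l * (m 1 * g 1 l) = m i * g i l * (m (i+1) * g (i+1) l) := by
    simpa using fin2_mul (fun k => m k * g k l) i
  have hh2 : h 0 l * h 1 l = h i l * h (i+1) l := by
    simpa using fin2_mul (fun k => h k l) i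
  have key : σ2 * Dq h g m l + m (i+1) * σ2 * (h i l + m i * g (i+1) l) * g i l
      = σ2 * h i l * (h (i+1) l + m (i+1) * g i l) := by
    unfold Dq
    rw [hh2]
    linear_combination (-σ2) * hm2
  rw [q, hss, div_mul_eq_mul_div, ← key, add_div, mul_div_cancel_right₀ _ hD]

lemma SINR_q {m : Fin 2 → ℝ} (hm : m ∈ F σ2 P h g) (i : Fin 2) (l : Fin L) :
    twoUserSINR L σ2 h g (q σ2 h g m) i l = m i := by
  have hD := Dq_pos σ2 P h g hσ2 hP hh hg hm l
  have hden := q_denom σ2 h g m i l hD.ne'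
  have hpos : 0 < h (i+1) l + m (i+1) * g i l := by
    have := hh (i+1) l; have := hg i l; have := hm.1 (i+1); positivity
  have hip := hh i l
  have h1 : Dq h g m l ≠ 0 := hD.ne'
  have h2 : σ2 ≠ 0 := hσ2.ne'
  have h3 : h i l ≠ 0 := hip.ne'
  have h4 : h (i+1) l + m (i+1) * g i l ≠ 0 := hpos.ne'
  rw [twoUserSINR, hden, q]
  field_simp

lemma sumRate_q {m : Fin 2 → ℝ} (hL : 1 ≤ L) (hm : m ∈ F σ2 P h g) :
    twoUserSumRate L σ2 h g (q σ2 h g m) = G m := by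
  haveI : Nonempty (Fin L) := ⟨⟨0, hL⟩⟩
  unfold twoUserSumRate G
  congr 1
  funext i
  congr 1
  rw [funext fun l => SINR_q σ2 P h g hσ2 hP hh hg hm i l, ciInf_const]


lemma mins_mem_F (hL : 1 ≤ L) {p : Fin 2 → Fin L → ℝ}
    (hp : ∀ i l, p i l ∈ Set.Icc (0:ℝ) P) :
    (fun i => ⨅ l, twoUserSINR L σ2 h g p i l) ∈ F σ2 P h g := by
  haveI : Nonempty (Fin L) := ⟨⟨0, hL⟩⟩
  set m := fun i => ⨅ l, twoUserSINR L σ2 h g p i l with hmdef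
  have hden : ∀ (i : Fin 2) (l : Fin L), 0 < σ2 + p (i+1) l * g i l := by
    intro i l
    have := (hp (i+1) l).1; have := hg i l
    positivity
  have hSnn : ∀ (i : Fin 2) (l : Fin L), 0 ≤ twoUserSINR L σ2 h g p i l := by
    intro i l
    exact div_nonneg (mul_nonneg (hp i l).1 (hh i l).le) (hden i l).le
  have hm0 : ∀ i, 0 ≤ m i := fun i => le_ciInf (hSnn i)
  have hmle : ∀ (i : Fin 2) (l : Fin L),
      m i * (σ2 + p (i+1) l * g i l) ≤ p i l * h i l := by
    intro i l
    have h1 : m i ≤ twoUserSINR L σ2 h g p i l :=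
      ciInf_le (Set.Finite.bddBelow (Set.finite_range _)) l
    rw [twoUserSINR] at h1
    exact (le_div_iff₀ (hden i l)).mp h1
  refine ⟨hm0, ?_⟩
  intro i l
  have hss : i + 1 + 1 = i := fin2_ss i
  have hm2 : m 0 * m 1 * (g 0 l * g 1 l) = m i * m (i+1) * (g i l * g (i+1) l) := by
    have h1 : m 0 * g 0 l * (m 1 * g 1 l) = m i * g i l * (m (i+1) * g (i+1) l) := by
      simpa using fin2_mul (fun k => m k * g k l) i
    linear_combination h1
  have hh2 : h 0 l * h 1 l = h i l * h (i+1) l := by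
    simpa using fin2_mul (fun k => h k l) i
  unfold Con ConLHS
  rw [hm2, hh2]
  -- abbreviations
  have hA := hmle i l
  have hB := hmle (i+1) l
  rw [hss] at hB
  have e1 : m i * (σ2 + p (i+1) l * g i l) * h (i+1) l ≤ p i l * h i l * h (i+1) l :=
    mul_le_mul_of_nonneg_right hA (hh (i+1) l).le
  have e2 : (m i * g i l) * (m (i+1) * (σ2 + p i l * g (i+1) l))
      ≤ (m i * g i l) * (p (i+1) l * h (i+1) l) :=
    mul_le_mul_of_nonneg_left hB (mul_nonneg (hm0 i) (hg i l))
  have star : m i * σ2 * (h (i+1) l + m (i+1) * g i l)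
      ≤ p i l * (h i l * h (i+1) l - m i * m (i+1) * (g i l * g (i+1) l)) := by
    nlinarith [e1, e2]
  rcases eq_or_lt_of_le (hp i l).1 with hpi0 | hpip
  · rw [← hpi0] at star
    have hterm : 0 ≤ m i * σ2 * (m (i+1) * g i l) := by
      have := hm0 i; have := hm0 (i+1); have := hg i l; positivity
    have h0 : m i * σ2 * h (i+1) l ≤ 0 := by nlinarith [star, hterm]
    have hmi : m i = 0 := by
      have h6 := mul_pos hσ2 (hh (i+1) l)
      nlinarith [hm0 i, h0]
    rw [hmi]
    have h7 := hh i l; have h8 := hh (i+1) l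
    nlinarith [mul_pos hP (mul_pos h7 h8)]
  · have hE : 0 ≤ h i l * h (i+1) l - m i * m (i+1) * (g i l * g (i+1) l) := by
      nlinarith [star, num_nonneg σ2 P h g hσ2 hP hh hg hm0 i l]
    have h2 : p i l * (h i l * h (i+1) l - m i * m (i+1) * (g i l * g (i+1) l))
        ≤ P * (h i l * h (i+1) l - m i * m (i+1) * (g i l * g (i+1) l)) :=
      mul_le_mul_of_nonneg_right (hp i l).2 hE
    nlinarith [star]

omit hσ2 hP hh hg in
lemma isClosed_F : IsClosed (F σ2 P h g) := by
  have h1 : F σ2 P h g = (⋂ i, {m : Fin 2 → ℝ | 0 ≤ m i}) ∩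
      ⋂ i, ⋂ l, {m : Fin 2 → ℝ | Con σ2 P h g m i l} := by
    ext m
    simp only [F, Set.mem_inter_iff, Set.mem_iInter, Set.mem_setOf_eq]
  rw [h1]
  refine IsClosed.inter (isClosed_iInter fun i => ?_)
    (isClosed_iInter fun i => isClosed_iInter fun l => ?_)
  · exact isClosed_le continuous_const (continuous_apply i)
  · unfold Con
    refine isClosed_le ?_ continuous_const
    have hc : ∀ k : Fin 2, Continuous fun m : Fin 2 → ℝ => m k := fun k => continuous_apply k
    continuity

omit hσ2 hP hh hg in
lemma contOn_G : ContinuousOn (G) (F σ2 P h g) := by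
  unfold G
  apply continuousOn_finset_sum
  intro i _
  intro m hm
  have h1 : (1:ℝ) + m i ≠ 0 := by have := hm.1 i; positivity
  have h2 : ContinuousAt (fun m : Fin 2 → ℝ => 1 + m i) m :=
    (continuous_const.add (continuous_apply i)).continuousAt
  have h3 : ContinuousAt (Real.logb 2) ((fun m : Fin 2 → ℝ => 1 + m i) m) :=
    Real.continuousAt_logb h1
  have h4 : ContinuousAt (fun m : Fin 2 → ℝ => Real.logb 2 (1 + m i)) m :=
    ContinuousAt.comp (g := Real.logb 2) (f := fun m : Fin 2 → ℝ => 1 + m i) h3 h2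
  exact h4.continuousWithinAt

lemma exists_max_F (hL : 1 ≤ L) : ∃ m ∈ F σ2 P h g, ∀ m' ∈ F σ2 P h g, G m' ≤ G m := by
  have hne : (F σ2 P h g).Nonempty := by
    refine ⟨0, fun i => le_refl 0, fun i l => ?_⟩
    unfold Con ConLHS
    have := hh 0 l; have := hh 1 l
    simp
    positivity
  have hsub : F σ2 P h g ⊆ Set.pi Set.univ (fun i => Set.Icc (0:ℝ) (P * h i ⟨0,hL⟩ / σ2)) := by
    intro m hm i _
    refine ⟨hm.1 i, ?_⟩
    have hc := hm.2 i ⟨0, hL⟩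
    unfold Con ConLHS at hc
    have hprod : (0:ℝ) ≤ m 0 * m 1 * (g 0 ⟨0,hL⟩ * g 1 ⟨0,hL⟩) := by
      have := hm.1 0; have := hm.1 1; have := hg 0 ⟨0,hL⟩; have := hg 1 ⟨0,hL⟩; positivity
    have hh2 : h 0 ⟨0,hL⟩ * h 1 ⟨0,hL⟩ = h i ⟨0,hL⟩ * h (i+1) ⟨0,hL⟩ := by
      simpa using fin2_mul (fun k => h k ⟨0,hL⟩) i
    rw [le_div_iff₀ hσ2]
    have e3 : m i * σ2 * h (i+1) ⟨0,hL⟩ ≤ m i * σ2 * (h (i+1) ⟨0,hL⟩ + m (i+1) * g i ⟨0,hL⟩) := by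
      nlinarith [mul_nonneg (mul_nonneg (hm.1 i) hσ2.le)
        (mul_nonneg (hm.1 (i+1)) (hg i ⟨0,hL⟩))]
    have := hh (i+1) ⟨0,hL⟩
    nlinarith [hc, hh2]
  have hcomp : IsCompact (F σ2 P h g) :=
    (isCompact_univ_pi (fun i => isCompact_Icc)).of_isClosed_subset
      (isClosed_F σ2 P h g) hsub
  obtain ⟨m, hmF, hmax⟩ := hcomp.exists_isMaxOn hne (contOn_G σ2 P h g)
  exact ⟨m, hmF, fun m' hm' => hmax hm'⟩

lemma exists_active {m : Fin 2 → ℝ} (hm : m ∈ F σ2 P h g)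
    (hmax : ∀ m' ∈ F σ2 P h g, G m' ≤ G m) (k : Fin 2) (A : Set (Fin 2 × Fin L))
    (hA : ∀ il ∈ A, ∀ t, m k ≤ t → Con σ2 P h g (Function.update m k t) il.1 il.2) :
    ∃ i l, (i, l) ∉ A ∧ ConLHS σ2 P h g m i l = P * (h 0 l * h 1 l) := by
  by_contra hcon
  push_neg at hcon
  have hstrict : ∀ i l, (i,l) ∉ A → ConLHS σ2 P h g m i l < P * (h 0 l * h 1 l) := by
    intro i l hil
    exact lt_of_le_of_ne (hm.2 i l) (hcon i l hil)
  set u : ℝ → (Fin 2 → ℝ) := fun t => Function.update m k t with hu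
  have hcu : ∀ x : Fin 2, Continuous fun t => u t x := by
    intro x
    by_cases hx : x = k
    · subst hx
      have : (fun t => u t x) = fun t => t := by
        funext t; simp [u, Function.update_self]
      rw [this]; exact continuous_id
    · have : (fun t => u t x) = fun _ => m x := by
        funext t; simp [u, Function.update_of_ne hx]
      rw [this]; exact continuous_const
  have hcL : ∀ (i : Fin 2) (l : Fin L), Continuous fun t => ConLHS σ2 P h g (u t) i l := by
    intro i l
    unfold ConLHS
    exact (((hcu i).mul continuous_const).mul
      (continuous_const.add ((hcu (i+1)).mul continuous_const))).add
      (continuous_const.mul (((hcu 0).mul (hcu 1)).mul continuous_const))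
  set W : Set ℝ :=
    ⋂ i, ⋂ l, {t | (i,l) ∈ A ∨ ConLHS σ2 P h g (u t) i l < P * (h 0 l * h 1 l)} with hW
  have hWopen : IsOpen W := by
    refine isOpen_iInter_of_finite fun i => isOpen_iInter_of_finite fun l => ?_
    by_cases hil : (i,l) ∈ A
    · have he : {t : ℝ | (i,l) ∈ A ∨ ConLHS σ2 P h g (u t) i l < P * (h 0 l * h 1 l)}
          = Set.univ := by
        ext t; simp [hil]
      rw [he]; exact isOpen_univ
    · have he : {t : ℝ | (i,l) ∈ A ∨ ConLHS σ2 P h g (u t) i l < P * (h 0 l * h 1 l)}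
          = {t : ℝ | ConLHS σ2 P h g (u t) i l < P * (h 0 l * h 1 l)} := by
        ext t; simp [hil]
      rw [he]; exact isOpen_lt (hcL i l) continuous_const
  have hmem : m k ∈ W := by
    rw [hW]
    simp only [Set.mem_iInter, Set.mem_setOf_eq]
    intro i l
    by_cases hil : (i,l) ∈ A
    · exact Or.inl hil
    · refine Or.inr ?_
      have : u (m k) = m := by simp [u, Function.update_eq_self]
      rw [this]
      exact hstrict i l hil
  obtain ⟨ε, hε, hball⟩ := Metric.isOpen_iff.mp hWopen (m k) hmem
  set t : ℝ := m k + ε/2 with ht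
  have htW : t ∈ W := by
    apply hball
    rw [Metric.mem_ball, Real.dist_eq, ht]
    rw [show m k + ε/2 - m k = ε/2 by ring, abs_of_pos (by linarith)]
    linarith
  have htk : m k ≤ t := by rw [ht]; linarith
  have htk' : m k < t := by rw [ht]; linarith
  have htF : u t ∈ F σ2 P h g := by
    constructor
    · intro x
      by_cases hx : x = k
      · rw [hx]; simp only [u, Function.update_self]
        have := hm.1 k; linarith
      · simp only [u, Function.update_of_ne hx]; exact hm.1 x
    · intro i l
      by_cases hil : (i,l) ∈ A
      · exact hA (i,l) hil t htk
      · rw [hW] at htW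
        simp only [Set.mem_iInter, Set.mem_setOf_eq] at htW
        rcases htW i l with hc | hc
        · exact absurd hc hil
        · exact hc.le
  have hgt : G m < G (u t) := by
    unfold G
    apply Finset.sum_lt_sum
    · intro x _
      by_cases hx : x = k
      · rw [hx]
        simp only [u, Function.update_self]
        have h1 : (0:ℝ) < 1 + m k := by have := hm.1 k; linarith
        exact Real.logb_le_logb_of_le one_lt_two h1 (by linarith)
      · simp only [u, Function.update_of_ne hx]
        exact le_rfl
    · refine ⟨k, Finset.mem_univ k, ?_⟩
      simp only [u, Function.update_self]
      have h1 : (0:ℝ) < 1 + m k := by have := hm.1 k; linarith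
      exact Real.logb_lt_logb one_lt_two h1 (by linarith)
  exact absurd (hmax (u t) htF) (not_le.mpr hgt)

/-- a globally optimal matched point with two binary powers -/
def Good (m : Fin 2 → ℝ) : Prop :=
  m ∈ F σ2 P h g ∧ (∀ m'' ∈ F σ2 P h g, G m'' ≤ G m) ∧
  ∃ il il' : Fin 2 × Fin L, il ≠ il' ∧
    q σ2 h g m il.1 il.2 ∈ ({0,P} : Set ℝ) ∧ q σ2 h g m il'.1 il'.2 ∈ ({0,P} : Set ℝ)

lemma caseA (hL : 1 ≤ L) {m : Fin 2 → ℝ} (hm : m ∈ F σ2 P h g)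
    (hmax : ∀ m' ∈ F σ2 P h g, G m' ≤ G m) (i : Fin 2) (hzero : m i = 0) :
    ∃ m', Good σ2 P h g m' := by
  obtain ⟨lmin, -, hlmin⟩ := Finset.exists_min_image Finset.univ (fun l => h (i+1) l)
    ⟨⟨0, hL⟩, Finset.mem_univ _⟩
  set μ : ℝ := P * h (i+1) lmin / σ2 with hμ
  have hμ0 : 0 ≤ μ := by
    have := (hh (i+1) lmin).le
    positivity
  set m' : Fin 2 → ℝ := fun k => if k = i then 0 else μ with hm'
  have hm'i : m' i = 0 := by simp [hm']
  have hm'j : m' (i+1) = μ := by simp [hm', fin2_ne i]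
  have hm'prod : m' 0 * m' 1 = 0 := by
    have := fin2_mul (fun k => m' k) i
    simp only [hm'i] at this
    simpa using this
  have hF' : m' ∈ F σ2 P h g := by
    constructor
    · intro k
      rcases fin2_eq_or k i with hk | hk
      · rw [hk, hm'i]
      · rw [hk, hm'j]; exact hμ0
    · intro k l
      unfold Con ConLHS
      rw [hm'prod]
      have hh2 : h 0 l * h 1 l = h i l * h (i+1) l := by
        simpa using fin2_mul (fun k => h k l) i
      rcases fin2_eq_or k i with hk | hk
      · subst hk
        rw [hm'i]
        have h9 := mul_pos hP (mul_pos (hh 0 l) (hh 1 l))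
        nlinarith [h9]
      · subst hk
        rw [hm'j, fin2_ss i, hm'i, hh2]
        have h2 : μ * σ2 = P * h (i+1) lmin := by
          rw [hμ]; field_simp
        have h3 := hlmin l (Finset.mem_univ l)
        have h9 : P * (h (i+1) lmin * h i l) ≤ P * (h (i+1) l * h i l) :=
          mul_le_mul_of_nonneg_left (mul_le_mul_of_nonneg_right h3 (hh i l).le) hP.le
        have h10 : μ * σ2 * (h i l + 0 * g (i+1) l) + P * (0 * (g 0 l * g 1 l))
            = P * (h (i+1) lmin * h i l) := by
          linear_combination (h i l) * h2
        rw [h10]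
        nlinarith [h9]
  have hmax' : ∀ m'' ∈ F σ2 P h g, G m'' ≤ G m' := by
    intro m'' hm''
    refine le_trans (hmax m'' hm'') ?_
    have hle : m (i+1) ≤ μ := by
      have hc := hm.2 (i+1) lmin
      unfold Con ConLHS at hc
      rw [fin2_ss i, hzero] at hc
      have hmprod : m 0 * m 1 = 0 := by
        have := fin2_mul (fun k => m k) i
        simp only [hzero] at this
        simpa using this
      rw [hmprod] at hc
      have hh2 : h 0 lmin * h 1 lmin = h i lmin * h (i+1) lmin := by
        simpa using fin2_mul (fun k => h k lmin) i
      rw [hh2] at hc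
      have h4 := hh i lmin
      have h5 : m (i+1) * σ2 ≤ P * h (i+1) lmin := by
        have h6 : m (i+1) * σ2 * h i lmin ≤ P * h (i+1) lmin * h i lmin := by nlinarith
        exact le_of_mul_le_mul_right (by nlinarith) h4
      rw [hμ, le_div_iff₀ hσ2]
      linarith
    simp only [G]
    rw [fin2_sum (fun k => Real.logb 2 (1 + m k)) i,
      fin2_sum (fun k => Real.logb 2 (1 + m' k)) i, hzero, hm'i, hm'j]
    have h7 : (0:ℝ) < 1 + m (i+1) := by have := hm.1 (i+1); linarith
    have h8 := Real.logb_le_logb_of_le one_lt_two h7 (by linarith : 1 + m (i+1) ≤ 1 + μ)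
    linarith
  refine ⟨m', hF', hmax', ⟨(i, lmin), (i+1, lmin), ?_, ?_, ?_⟩⟩
  · simp only [ne_eq, Prod.mk.injEq, not_and]
    intro hcon
    exact absurd hcon.symm (fin2_ne i)
  · left
    simp [q, hm'i]
  · right
    apply con_eq_iff_q_eq_P σ2 P h g hσ2 hP hh hg hF'
    unfold ConLHS
    rw [hm'prod, fin2_ss i, hm'j, hm'i]
    have hh2 : h 0 lmin * h 1 lmin = h i lmin * h (i+1) lmin := by
      simpa using fin2_mul (fun k => h k lmin) i
    rw [hh2, hμ]
    field_simp
    ring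

lemma caseB2 {m : Fin 2 → ℝ} (hm : m ∈ F σ2 P h g)
    (hmax : ∀ m' ∈ F σ2 P h g, G m' ≤ G m) (i : Fin 2) (l0 : Fin L)
    (hact : ConLHS σ2 P h g m i l0 = P * (h 0 l0 * h 1 l0)) (hgz : g i l0 = 0) :
    ∃ m', Good σ2 P h g m' := by
  have hgg : g 0 l0 * g 1 l0 = 0 := by
    have := fin2_mul (fun k => g k l0) i
    simp only [hgz] at this
    simpa using this
  have hA : ∀ il ∈ ({(i, l0)} : Set (Fin 2 × Fin L)), ∀ t, m (i+1) ≤ t →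
      Con σ2 P h g (Function.update m (i+1) t) il.1 il.2 := by
    intro il hil t _
    rw [Set.mem_singleton_iff] at hil
    subst hil
    unfold Con ConLHS
    simp only [Function.update_of_ne (fin2_ne i).symm, Function.update_self, hgz, hgg]
    unfold ConLHS at hact
    rw [hgz, hgg] at hact
    nlinarith [hact]
  obtain ⟨i', l', hni, hact'⟩ := exists_active σ2 P h g hσ2 hP hh hg hm hmax (i+1)
    ({(i, l0)} : Set (Fin 2 × Fin L)) hA
  refine ⟨m, hm, hmax, (i, l0), (i', l'), ?_, ?_, ?_⟩
  · intro hc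
    rw [Set.mem_singleton_iff] at hni
    exact hni (by rw [← hc])
  · exact Or.inr (con_eq_iff_q_eq_P σ2 P h g hσ2 hP hh hg hm i l0 hact)
  · exact Or.inr (con_eq_iff_q_eq_P σ2 P h g hσ2 hP hh hg hm i' l' hact')

set_option maxHeartbeats 4000000 in
lemma caseB3 {m : Fin 2 → ℝ} (hm : m ∈ F σ2 P h g)
    (hmax : ∀ m' ∈ F σ2 P h g, G m' ≤ G m) (i : Fin 2) (l0 : Fin L)
    (hact : ConLHS σ2 P h g m i l0 = P * (h 0 l0 * h 1 l0))
    (hmi : 0 < m i) (hgb : 0 < g i l0) :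
    ∃ m', Good σ2 P h g m' := by
  obtain ⟨a, ha'⟩ : ∃ x : ℝ, x = h i l0 := ⟨_, rfl⟩
  obtain ⟨b, hb'⟩ : ∃ x : ℝ, x = g i l0 := ⟨_, rfl⟩
  obtain ⟨c, hc'⟩ : ∃ x : ℝ, x = h (i+1) l0 := ⟨_, rfl⟩
  obtain ⟨d, hd'⟩ : ∃ x : ℝ, x = g (i+1) l0 := ⟨_, rfl⟩
  obtain ⟨e, he''⟩ : ∃ x : ℝ, x = b * (σ2 + P * d) := ⟨_, rfl⟩
  have ha : 0 < a := ha' ▸ hh i l0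
  have hb : 0 < b := hb' ▸ hgb
  have hc : 0 < c := hc' ▸ hh (i+1) l0
  have hd : 0 ≤ d := hd' ▸ hg (i+1) l0
  have he : 0 < e := by rw [he'']; positivity
  obtain ⟨ψ, hψ'⟩ : ∃ f : ℝ → ℝ, f = fun t => c * (P*a - t*σ2) / (t * e) := ⟨_, rfl⟩
  obtain ⟨M, hM'⟩ : ∃ f : ℝ → Fin 2 → ℝ,
      f = fun t k => if k = i then t else ψ t := ⟨_, rfl⟩
  obtain ⟨δ, hδ'⟩ : ∃ x : ℝ, x = σ2*P*a/(σ2^2 + P*e) := ⟨_, rfl⟩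
  obtain ⟨B, hB'⟩ : ∃ x : ℝ, x = P*a/σ2 := ⟨_, rfl⟩
  have hδpos : 0 < δ := by rw [hδ']; positivity
  have hMi : ∀ t, M t i = t := fun t => by simp [hM']
  have hMj : ∀ t, M t (i+1) = ψ t := fun t => by simp [hM', fin2_ne i]
  have hgg : g 0 l0 * g 1 l0 = b * d := by
    rw [hb', hd']; simpa using fin2_mul (fun k => g k l0) i
  have hhh : h 0 l0 * h 1 l0 = a * c := by
    rw [ha', hc']; simpa using fin2_mul (fun k => h k l0) i
  -- the defining property of ψ
  have f1 : ∀ t : ℝ, t ≠ 0 → t * ψ t * (b*(σ2+P*d)) = c*(P*a - t*σ2) := by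
    intro t ht
    rw [hψ', ← he'']
    field_simp
  -- the (i,l0) constraint is active along the whole curve
  have f2 : ∀ t : ℝ, t ≠ 0 → ConLHS σ2 P h g (M t) i l0 = P * (h 0 l0 * h 1 l0) := by
    intro t ht
    have hMM : M t 0 * M t 1 = t * ψ t := by
      have := fin2_mul (fun k => M t k) i
      simp only [hMi, hMj] at this
      simpa using this
    unfold ConLHS
    rw [hMM, hMi, hMj, hgg, hhh, ← hb', ← hc']
    linear_combination (f1 t ht)
  -- active constraint written with local names
  have hact' : m i * σ2 * (c + m (i+1) * b) + P * (m i * m (i+1) * (b*d)) = P*(a*c) := by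
    unfold ConLHS at hact
    have hmm : m 0 * m 1 = m i * m (i+1) := by simpa using fin2_mul (fun k => m k) i
    rw [hmm, hgg, hhh, ← hb', ← hc'] at hact
    linear_combination hact
  -- m corresponds to the parameter value m i
  have f3 : ψ (m i) = m (i+1) := by
    have hψm : ψ (m i) = c * (P*a - m i*σ2) / (m i * e) := by rw [hψ']
    rw [hψm, he'', div_eq_iff (by positivity : m i * (b*(σ2+P*d)) ≠ 0), eq_comm]
    linear_combination hact'
  have hMm : M (m i) = m := by
    funext k
    rcases fin2_eq_or k i with hk | hk
    · rw [hk, hMi]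
    · rw [hk, hMj, f3]
  -- feasibility forces ψ t ≤ P*c/σ2
  have f4 : ∀ t : ℝ, M t ∈ F σ2 P h g → ψ t * σ2 ≤ P * c := by
    intro t hMF
    have hc1 := hMF.2 (i+1) l0
    unfold Con ConLHS at hc1
    have hMM : M t 0 * M t 1 = t * ψ t := by
      have := fin2_mul (fun k => M t k) i
      simp only [hMi, hMj] at this
      simpa using this
    rw [hMM, hgg, hhh, fin2_ss i, hMi, hMj, ← ha', ← hd'] at hc1
    have ht0 : 0 ≤ t := by rw [← hMi t]; exact hMF.1 i
    have hψ0 : 0 ≤ ψ t := by rw [← hMj t]; exact hMF.1 (i+1)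
    have h9 : ψ t * σ2 * a ≤ P * (a*c) := by
      nlinarith [hc1, mul_nonneg (mul_nonneg (mul_nonneg hψ0 hσ2.le) ht0) hd,
        mul_nonneg (mul_nonneg (mul_nonneg (mul_nonneg hP.le ht0) hψ0) hb.le) hd]
    nlinarith [h9, ha]
  -- the δ-characterization
  have hδle : ∀ t : ℝ, 0 < t → (ψ t * σ2 ≤ P * c ↔ δ ≤ t) := by
    intro t ht
    have hy := f1 t ht.ne'
    rw [← he''] at hy
    have hte : 0 < t * e := mul_pos ht he
    have hden : 0 < σ2^2 + P*e := by positivity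
    constructor
    · intro H
      have H3 : ψ t * σ2 * (t * e) ≤ P*c*(t*e) :=
        mul_le_mul_of_nonneg_right H hte.le
      rw [hδ', div_le_iff₀ hden]
      nlinarith [H3, hy, hc, ht]
    · intro H
      rw [hδ', div_le_iff₀ hden] at H
      have H5 : σ2 * (c*(P*a - t*σ2)) ≤ P*c*(t*e) := by nlinarith [H, hc]
      have H6 : ψ t * σ2 * (t*e) ≤ P*c*(t*e) := by nlinarith [H5, hy]
      have := mul_pos ht he
      nlinarith [H6, this]
  have hδlt : ∀ t : ℝ, 0 < t → (ψ t * σ2 < P * c ↔ δ < t) := by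
    intro t ht
    have hy := f1 t ht.ne'
    rw [← he''] at hy
    have hte : 0 < t * e := mul_pos ht he
    have hden : 0 < σ2^2 + P*e := by positivity
    constructor
    · intro H
      have H3 : ψ t * σ2 * (t * e) < P*c*(t*e) :=
        mul_lt_mul_of_pos_right H hte
      rw [hδ', div_lt_iff₀ hden]
      nlinarith [H3, hy, hc, ht]
    · intro H
      rw [hδ', div_lt_iff₀ hden] at H
      have H5 : σ2 * (c*(P*a - t*σ2)) < P*c*(t*e) := by nlinarith [H, hc]
      have H6 : ψ t * σ2 * (t*e) < P*c*(t*e) := by nlinarith [H5, hy]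
      have := mul_pos ht he
      nlinarith [H6, this]
  -- the B-characterization
  have hBle : ∀ t : ℝ, 0 < t → (0 ≤ ψ t ↔ t ≤ B) := by
    intro t ht
    have hy := f1 t ht.ne'
    rw [← he''] at hy
    constructor
    · intro H
      rw [hB', le_div_iff₀ hσ2]
      nlinarith [mul_nonneg (mul_nonneg ht.le H) he.le, hy, hc]
    · intro H
      rw [hB', le_div_iff₀ hσ2] at H
      have h7 : 0 ≤ t * ψ t * e := by nlinarith [hy, hc, H]
      nlinarith [h7, mul_pos ht he]
  have hBlt : ∀ t : ℝ, 0 < t → (0 < ψ t ↔ t < B) := by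
    intro t ht
    have hy := f1 t ht.ne'
    rw [← he''] at hy
    constructor
    · intro H
      rw [hB', lt_div_iff₀ hσ2]
      nlinarith [mul_pos (mul_pos ht H) he, hy, hc]
    · intro H
      rw [hB', lt_div_iff₀ hσ2] at H
      have h7 : 0 < t * ψ t * e := by nlinarith [hy, hc, H]
      nlinarith [h7, mul_pos ht he]
  -- the feasible parameter set S along the active curve
  obtain ⟨S, hS'⟩ : ∃ s : Set ℝ, s = Set.Icc δ B ∩ (M ⁻¹' F σ2 P h g) := ⟨_, rfl⟩
  have hψcont : ContinuousOn ψ (Set.Icc δ B) := by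
    rw [hψ']
    apply ContinuousOn.div
    · exact (continuous_const.mul (continuous_const.sub
        (continuous_id.mul continuous_const))).continuousOn
    · exact (continuous_id.mul continuous_const).continuousOn
    · intro t htIcc
      have ht : 0 < t := lt_of_lt_of_le hδpos htIcc.1
      positivity
  have hMcont : ContinuousOn M (Set.Icc δ B) := by
    rw [hM']
    apply continuousOn_pi.mpr
    intro k
    by_cases hk : k = i
    · simp only [hk, if_pos]
      exact continuousOn_id
    · simp only [if_neg hk]
      exact hψcont
  have hSclosed : IsClosed S := by
    rw [hS']
    exact hMcont.preimage_isClosed_of_isClosed isClosed_Icc (isClosed_F σ2 P h g)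
  have hScomp : IsCompact S :=
    IsCompact.of_isClosed_subset isCompact_Icc hSclosed
      (by rw [hS']; exact Set.inter_subset_left)
  have hmiS : m i ∈ S := by
    rw [hS']
    refine ⟨⟨?_, ?_⟩, ?_⟩
    · refine (hδle (m i) hmi).mp ?_
      have := f4 (m i) (by rw [hMm]; exact hm)
      exact this
    · refine (hBle (m i) hmi).mp ?_
      rw [f3]; exact hm.1 (i+1)
    · show M (m i) ∈ F σ2 P h g
      rw [hMm]; exact hm
  have hGcont : ContinuousOn (fun t => G (M t)) S := by
    apply ContinuousOn.comp (contOn_G σ2 P h g)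
      (hMcont.mono (by rw [hS']; exact Set.inter_subset_left))
    intro t htS
    rw [hS'] at htS
    exact htS.2
  obtain ⟨u, huS, humax⟩ := hScomp.exists_isMaxOn ⟨m i, hmiS⟩ hGcont
  have huIcc : u ∈ Set.Icc δ B := by rw [hS'] at huS; exact huS.1
  have hu0 : 0 < u := lt_of_lt_of_le hδpos huIcc.1
  have huF : M u ∈ F σ2 P h g := by rw [hS'] at huS; exact huS.2
  have humax' : ∀ m'' ∈ F σ2 P h g, G m'' ≤ G (M u) := by
    intro m'' hm''
    have h1 : G m'' ≤ G m := hmax m'' hm''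
    have h2 : G (M (m i)) ≤ G (M u) := humax hmiS
    rw [hMm] at h2
    linarith
  have hψu0 : 0 ≤ ψ u := by rw [← hMj u]; exact huF.1 (i+1)
  by_cases hz : ψ u = 0
  · refine ⟨M u, huF, humax', ⟨(i+1, l0), (i, l0), ?_, ?_, ?_⟩⟩
    · intro hcon
      exact (fin2_ne i) (congrArg Prod.fst hcon)
    · left
      have hMu0 : M u (i+1) = 0 := by rw [hMj]; exact hz
      show q σ2 h g (M u) (i+1) l0 = 0
      rw [q, hMu0]
      simp
    · right
      exact con_eq_iff_q_eq_P σ2 P h g hσ2 hP hh hg huF i l0 (f2 u hu0.ne')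
  · have hψupos : 0 < ψ u := lt_of_le_of_ne hψu0 (Ne.symm hz)
    by_cases hsec : ∃ il : Fin 2 × Fin L, il ≠ (i, l0) ∧
        ConLHS σ2 P h g (M u) il.1 il.2 = P * (h 0 il.2 * h 1 il.2)
    · obtain ⟨⟨i', l'⟩, hne, hact2⟩ := hsec
      refine ⟨M u, huF, humax', ⟨(i, l0), (i', l'), ?_, ?_, ?_⟩⟩
      · exact fun hcon => hne hcon.symm
      · exact Or.inr (con_eq_iff_q_eq_P σ2 P h g hσ2 hP hh hg huF i l0 (f2 u hu0.ne'))
      · exact Or.inr (con_eq_iff_q_eq_P σ2 P h g hσ2 hP hh hg huF i' l' hact2)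
    · exfalso
      push_neg at hsec
      have hstrict : ∀ il : Fin 2 × Fin L, il ≠ (i, l0) →
          ConLHS σ2 P h g (M u) il.1 il.2 < P * (h 0 il.2 * h 1 il.2) := by
        intro il hne
        exact lt_of_le_of_ne (huF.2 il.1 il.2) (hsec il hne)
      have hub : u < B := (hBlt u hu0).mp hψupos
      have hua : δ < u := by
        have hc1 : ConLHS σ2 P h g (M u) (i+1) l0 < P * (h 0 l0 * h 1 l0) :=
          hstrict (i+1, l0) (fun hcon => (fin2_ne i) (congrArg Prod.fst hcon))
        unfold ConLHS at hc1
        have hMM : M u 0 * M u 1 = u * ψ u := by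
          have := fin2_mul (fun k => M u k) i
          simp only [hMi, hMj] at this
          simpa using this
        rw [hMM, hgg, hhh, fin2_ss i, hMi, hMj, ← ha', ← hd'] at hc1
        have h9 : ψ u * σ2 * a < P * (a*c) := by
          nlinarith [hc1, mul_nonneg (mul_nonneg (mul_nonneg hψu0 hσ2.le) hu0.le) hd,
            mul_nonneg (mul_nonneg (mul_nonneg (mul_nonneg hP.le hu0.le) hψu0) hb.le) hd]
        have h10 : ψ u * σ2 < P * c := by nlinarith [h9, ha]
        exact (hδlt u hu0).mp h10
      have hψca : ContinuousAt ψ u := hψcont.continuousAt (Icc_mem_nhds hua hub)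
      have hca : ∀ k, ContinuousAt (fun t => M t k) u := by
        intro k
        rcases fin2_eq_or k i with hk | hk
        · have hfe : (fun t => M t k) = fun t => t := by funext t; rw [hk, hMi]
          rw [hfe]; exact continuousAt_id
        · have hfe : (fun t => M t k) = ψ := by funext t; rw [hk, hMj]
          rw [hfe]; exact hψca
      have hcont_t : ∀ (i' : Fin 2) (l' : Fin L),
          ContinuousAt (fun t => ConLHS σ2 P h g (M t) i' l') u := by
        intro i' l'
        unfold ConLHS
        exact (((hca i').mul continuousAt_const).mul
          (continuousAt_const.add ((hca (i'+1)).mul continuousAt_const))).add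
          (continuousAt_const.mul (((hca 0).mul (hca 1)).mul continuousAt_const))
      have hev : ∀ᶠ t in 𝓝 u, t ∈ S := by
        have h1 : ∀ᶠ t in 𝓝 u, t ∈ Set.Ioo δ B := isOpen_Ioo.eventually_mem ⟨hua, hub⟩
        have h2 : ∀ᶠ t in 𝓝 u, 0 < ψ t := ContinuousAt.eventually_lt continuousAt_const hψca hψupos
        have h3 : ∀ᶠ t in 𝓝 u, ∀ (i' : Fin 2) (l' : Fin L), (i',l') ≠ (i,l0) →
            ConLHS σ2 P h g (M t) i' l' < P * (h 0 l' * h 1 l') := by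
          rw [Filter.eventually_all]
          intro i'
          rw [Filter.eventually_all]
          intro l'
          by_cases hil : (i',l') = (i,l0)
          · exact Filter.Eventually.of_forall (fun t hcon => absurd hil hcon)
          · have hlt := hstrict (i',l') hil
            simp only at hlt
            have := (hcont_t i' l').eventually_lt continuousAt_const hlt
            exact this.mono (fun t ht _ => ht)
        filter_upwards [h1, h2, h3] with t hIoo hψt hcons
        rw [hS']
        have ht0 : 0 < t := lt_trans hδpos hIoo.1
        refine ⟨⟨hIoo.1.le, hIoo.2.le⟩, ?_, ?_⟩
        · intro k
          rcases fin2_eq_or k i with hk | hk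
          · rw [hk, hMi]; exact ht0.le
          · rw [hk, hMj]; exact hψt.le
        · intro k l
          by_cases hkl : (k,l) = (i,l0)
          · have hk : k = i := congrArg Prod.fst hkl
            have hl : l = l0 := congrArg Prod.snd hkl
            subst hk; subst hl
            exact le_of_eq (f2 t ht0.ne')
          · exact (hcons k l hkl).le
      rw [Metric.eventually_nhds_iff] at hev
      obtain ⟨ε₀, hε₀, hball⟩ := hev
      obtain ⟨ε, hε'⟩ : ∃ x : ℝ, x = min (ε₀/2) (u/2) := ⟨_, rfl⟩
      have hεpos : 0 < ε := by rw [hε']; positivity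
      have hεu : ε < u := by
        rw [hε']
        calc min (ε₀/2) (u/2) ≤ u/2 := min_le_right _ _
        _ < u := by linarith
      have hεε₀ : ε < ε₀ := by
        rw [hε']
        calc min (ε₀/2) (u/2) ≤ ε₀/2 := min_le_left _ _
        _ < ε₀ := by linarith
      have hmem1 : u - ε ∈ S := by
        apply hball
        rw [Real.dist_eq, show u - ε - u = -ε by ring, abs_neg, abs_of_pos hεpos]
        exact hεε₀
      have hmem2 : u + ε ∈ S := by
        apply hball
        rw [Real.dist_eq, show u + ε - u = ε by ring, abs_of_pos hεpos]
        exact hεε₀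
      -- strict convexity of the rate along the curve
      obtain ⟨A2, hA2'⟩ : ∃ x : ℝ, x = c*(P*a)/e := ⟨_, rfl⟩
      have hA2 : 0 < A2 := by rw [hA2']; positivity
      obtain ⟨α, hα'⟩ : ∃ x : ℝ, x = 1 - c*σ2/e := ⟨_, rfl⟩
      have hform : ∀ t : ℝ, t ≠ 0 → (1+t)*(1+ψ t) = α*t + (α+A2) + A2/t := by
        intro t ht
        have hψt : ψ t = c*(P*a - t*σ2)/(t*e) := by rw [hψ']
        rw [hψt, hα', hA2']
        field_simp
        ring
      have hne1 : u - ε ≠ 0 := by have : 0 < u - ε := by linarith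
                                  exact this.ne'
      have hne2 : u + ε ≠ 0 := by positivity
      have h3' : (1+(u-ε))*(1+ψ (u-ε)) + (1+(u+ε))*(1+ψ (u+ε)) - 2*((1+u)*(1+ψ u))
          = A2 * (1/(u-ε) + 1/(u+ε) - 2/u) := by
        rw [hform _ hne1, hform _ hne2, hform _ hu0.ne']
        ring
      have hX : 1/(u-ε) + 1/(u+ε) - 2/u = 2*ε^2/((u-ε)*(u+ε)*u) := by
        have h4 : 0 < u - ε := by linarith
        field_simp
        ring
      have hXpos : 0 < 1/(u-ε) + 1/(u+ε) - 2/u := by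
        rw [hX]
        have h4 : 0 < u - ε := by linarith
        have h5 : 0 < u + ε := by linarith
        positivity
      have hgtboth : (1+u)*(1+ψ u) < (1+(u-ε))*(1+ψ (u-ε)) ∨
          (1+u)*(1+ψ u) < (1+(u+ε))*(1+ψ (u+ε)) := by
        by_contra hcc
        push_neg at hcc
        nlinarith [h3', hXpos, hA2, hcc.1, hcc.2]
      have hGform : ∀ t, t ∈ S → G (M t) = Real.logb 2 ((1+t)*(1+ψ t)) := by
        intro t htS
        rw [hS'] at htS
        have ht0 : 0 < t := lt_of_lt_of_le hδpos htS.1.1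
        have hψt0 : 0 ≤ ψ t := by rw [← hMj t]; exact htS.2.1 (i+1)
        have h1' : (1:ℝ)+t ≠ 0 := by positivity
        have h2' : (1:ℝ)+ψ t ≠ 0 := by positivity
        rw [Real.logb_mul h1' h2']
        unfold G
        rw [fin2_sum (fun k => Real.logb 2 (1 + M t k)) i, hMi, hMj]
      have hΦpos : 0 < (1+u)*(1+ψ u) := by positivity
      rcases hgtboth with hbig | hbig
      · have hlt := Real.logb_lt_logb one_lt_two hΦpos hbig
        rw [← hGform u huS, ← hGform _ hmem1] at hlt
        exact absurd (humax hmem1) (not_le.mpr hlt)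
      · have hlt := Real.logb_lt_logb one_lt_two hΦpos hbig
        rw [← hGform u huS, ← hGform _ hmem2] at hlt
        exact absurd (humax hmem2) (not_le.mpr hlt)
lemma exists_good (hL : 1 ≤ L) : ∃ m', Good σ2 P h g m' := by
  obtain ⟨m, hm, hmax⟩ := exists_max_F σ2 P h g hσ2 hP hh hg hL
  by_cases h0 : m 0 = 0
  · exact caseA σ2 P h g hσ2 hP hh hg hL hm hmax 0 h0
  by_cases h1 : m 1 = 0
  · exact caseA σ2 P h g hσ2 hP hh hg hL hm hmax 1 h1
  obtain ⟨i, l0, -, hact⟩ := exists_active σ2 P h g hσ2 hP hh hg hm hmax 0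
    (∅ : Set (Fin 2 × Fin L)) (fun il hil => absurd hil (Set.notMem_empty il))
  by_cases hgz : g i l0 = 0
  · exact caseB2 σ2 P h g hσ2 hP hh hg hm hmax i l0 hact hgz
  · have hmi : 0 < m i := by
      rcases fin2_eq_or i 0 with hi | hi
      · rw [hi]; exact lt_of_le_of_ne (hm.1 0) (Ne.symm h0)
      · rw [hi]
        show 0 < m 1
        exact lt_of_le_of_ne (hm.1 1) (Ne.symm h1)
    exact caseB3 σ2 P h g hσ2 hP hh hg hm hmax i l0 hact hmi
      (lt_of_le_of_ne (hg i l0) (Ne.symm hgz))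

end basic

end BinPA

/-- **Binary power allocation at an optimum (Theorem 1).**
In a two-user decode-and-forward network with `L ≥ 1` hops, positive direct
gains, nonnegative cross gains, `σ² > 0` and `P > 0`, there exists a power
allocation in the box `[0,P]^{2×L}` that maximizes the achievable sum-rate over
the box, for which (a) each user's per-hop SINRs are equal across all hops and
(b) at least two of the `2L` transmit powers are binary, i.e. equal to `0` or
`P`. -/
theorem exists_maximizer_equal_SINRs_and_two_binary_powers
    (L : ℕ) (hL : 1 ≤ L) (σ2 P : ℝ) (hσ2 : 0 < σ2) (hP : 0 < P)
    (h g : Fin 2 → Fin L → ℝ)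
    (hh : ∀ i l, 0 < h i l) (hg : ∀ i l, 0 ≤ g i l) :
    ∃ pstar : Fin 2 → Fin L → ℝ,
      (∀ i l, pstar i l ∈ Set.Icc (0 : ℝ) P) ∧
      (∀ p : Fin 2 → Fin L → ℝ, (∀ i l, p i l ∈ Set.Icc (0 : ℝ) P) →
        twoUserSumRate L σ2 h g p ≤ twoUserSumRate L σ2 h g pstar) ∧
      (∀ i l, twoUserSINR L σ2 h g pstar i l =
        twoUserSINR L σ2 h g pstar i ⟨0, hL⟩) ∧
      (∃ il il' : Fin 2 × Fin L, il ≠ il' ∧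
        pstar il.1 il.2 ∈ ({0, P} : Set ℝ) ∧
        pstar il'.1 il'.2 ∈ ({0, P} : Set ℝ)) := by
  obtain ⟨m, hmF, hmax, il, il', hne, hbin, hbin'⟩ :=
    BinPA.exists_good σ2 P h g hσ2 hP hh hg hL
  refine ⟨BinPA.q σ2 h g m, ?_, ?_, ?_, ⟨il, il', hne, hbin, hbin'⟩⟩
  · intro i l
    exact ⟨BinPA.q_nonneg σ2 P h g hσ2 hP hh hg hmF i l,
      BinPA.q_le_P σ2 P h g hσ2 hP hh hg hmF i l⟩
  · intro p hp
    have h1 := BinPA.mins_mem_F σ2 P h g hσ2 hP hh hg hL hp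
    have h2 := hmax _ h1
    have h3 := BinPA.sumRate_q σ2 P h g hσ2 hP hh hg hL hmF
    calc twoUserSumRate L σ2 h g p
        = BinPA.G (fun i => ⨅ l, twoUserSINR L σ2 h g p i l) := rfl
      _ ≤ BinPA.G m := h2
      _ = twoUserSumRate L σ2 h g (BinPA.q σ2 h g m) := h3.symm
  · intro i l
    rw [BinPA.SINR_q σ2 P h g hσ2 hP hh hg hmF i l,
      BinPA.SINR_q σ2 P h g hσ2 hP hh hg hmF i ⟨0, hL⟩]
end

section
/- Consider a two-user single-hop Gaussian interference channel with direct channel power gains a₁, a₂ > 0, cross-channel power gains b₁₂, b₂₁ ≥ 0, and noise power σ² > 0, where for transmit powers p₁, p₂ ≥ 0 the SINRs are γ₁(p₁,p₂) = a₁p₁/(σ² + b₂₁p₂) and γ₂(p₁,p₂) = a₂p₂/(σ² + b₁₂p₁). Fix p₂ ∈ [0,P] for some P > 0 and define F(p₁) = (1 + γ₁(p₁,p₂))·(1 + γ₂(p₁,p₂)). Then for every p₁ ∈ [0,P], F(p₁) ≤ max(F(0), F(P)); that is, over p₁ ∈ [0,P] the product F is maximized at an endpoint of the interval. -/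
lemma aux_compare (c d s b A x y : ℝ) (hA : 0 < A) (hx : 0 < s + b * x)
    (hy : 0 < s + b * y)
    (h : 0 ≤ (y - x) * (c * (s + b * x) * (s + b * y) + c * d * s - A * d * b)) :
    (1 + c * x / A) * (1 + d / (s + b * x)) ≤
      (1 + c * y / A) * (1 + d / (s + b * y)) := by
  have e1 : 1 + c * x / A = (A + c * x) / A := by field_simp
  have e2 : 1 + c * y / A = (A + c * y) / A := by field_simp
  have e3 : 1 + d / (s + b * x) = ((s + b * x) + d) / (s + b * x) := by field_simp
  have e4 : 1 + d / (s + b * y) = ((s + b * y) + d) / (s + b * y) := by field_simp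
  rw [e1, e2, e3, e4, div_mul_div_comm, div_mul_div_comm,
    div_le_div_iff₀ (by positivity) (by positivity)]
  nlinarith [mul_nonneg hA.le h]

/-- **Endpoint optimality in a single power variable.**
In a two-user single-hop Gaussian interference channel with direct gains
`a₁, a₂ > 0`, cross gains `b₁₂, b₂₁ ≥ 0` and noise `σ² > 0`, fix `p₂ ∈ [0,P]`
and let `F(p₁) = (1 + a₁p₁/(σ² + b₂₁p₂))·(1 + a₂p₂/(σ² + b₁₂p₁))`. Then for
every `p₁ ∈ [0,P]`, `F(p₁) ≤ max (F 0) (F P)`. -/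
theorem product_rate_endpoint_optimal_in_p1
    (a1 a2 b12 b21 σ2 P : ℝ)
    (ha1 : 0 < a1) (ha2 : 0 < a2) (hb12 : 0 ≤ b12) (hb21 : 0 ≤ b21)
    (hσ2 : 0 < σ2) (hP : 0 < P)
    (p2 : ℝ) (hp2 : p2 ∈ Set.Icc 0 P) :
    ∀ p1 ∈ Set.Icc (0 : ℝ) P,
      (1 + a1 * p1 / (σ2 + b21 * p2)) * (1 + a2 * p2 / (σ2 + b12 * p1)) ≤
        max ((1 + a1 * 0 / (σ2 + b21 * p2)) * (1 + a2 * p2 / (σ2 + b12 * 0)))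
            ((1 + a1 * P / (σ2 + b21 * p2)) * (1 + a2 * p2 / (σ2 + b12 * P))) := by
  obtain ⟨hp2l, hp2r⟩ := hp2
  rintro p1 ⟨hp1l, hp1r⟩
  have hA : 0 < σ2 + b21 * p2 := by positivity
  have hDx : 0 < σ2 + b12 * p1 := by positivity
  have hDP : 0 < σ2 + b12 * P := by positivity
  have hD0 : 0 < σ2 + b12 * 0 := by positivity
  set d : ℝ := a2 * p2 with hd
  rcases le_or_gt 0 (a1 * (σ2 + b12 * p1) * (σ2 + b12 * P) + a1 * d * σ2
      - (σ2 + b21 * p2) * d * b12) with h | h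
  · refine le_max_of_le_right ?_
    exact aux_compare a1 d σ2 b12 _ p1 P hA hDx hDP
      (mul_nonneg (by linarith) h)
  · refine le_max_of_le_left ?_
    refine aux_compare a1 d σ2 b12 _ p1 0 hA hDx hD0 ?_
    have hd0 : 0 ≤ d := mul_nonneg ha2.le hp2l
    have hkey : a1 * (σ2 + b12 * p1) * (σ2 + b12 * 0) + a1 * d * σ2
        - (σ2 + b21 * p2) * d * b12 ≤ 0 := by
      nlinarith [mul_nonneg (mul_nonneg ha1.le hDx.le) (mul_nonneg hb12 hP.le)]
    nlinarith [mul_nonneg hp1l (neg_nonneg.mpr hkey)]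
end

section
/- Consider a two-user single-hop Gaussian interference channel with direct channel power gains a₁, a₂ > 0, cross-channel power gains b₁₂, b₂₁ ≥ 0, and noise power σ² > 0, where for transmit powers p₁, p₂ ≥ 0 the SINRs are γ₁(p₁,p₂) = a₁p₁/(σ² + b₂₁p₂) and γ₂(p₁,p₂) = a₂p₂/(σ² + b₁₂p₁). Let P > 0 and F(p₁,p₂) = (1 + γ₁(p₁,p₂))·(1 + γ₂(p₁,p₂)). Then there exists (p₁*, p₂*) ∈ {0,P} × {0,P} such that F(p₁,p₂) ≤ F(p₁*, p₂*) for all (p₁,p₂) ∈ [0,P] × [0,P]; that is, binary power allocation is optimal for maximizing the product (1+γ₁)(1+γ₂) over the power box. -/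
lemma key_slice (c d b e P : ℝ) (hc : 0 ≤ c) (hd : 0 ≤ d) (hb : 0 ≤ b)
    (he : 0 < e) (hP : 0 < P) :
    ∀ x, 0 ≤ x → x ≤ P →
      (1 + c * x) * (1 + d / (e + b * x)) ≤
        max ((1 + c * 0) * (1 + d / (e + b * 0)))
            ((1 + c * P) * (1 + d / (e + b * P))) := by
  intro x hx0 hxP
  have hA : 0 < e + b * x := by nlinarith
  have hB : 0 < e + b * P := by nlinarith
  rcases le_total (d * (b - c * e)) 0 with h | h
  · -- monotone case: g x ≤ g P
    refine le_max_of_le_right ?_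
    have hD : 0 ≤ (P - x) * (c * ((e + b * x) * (e + b * P)) + d * (c * e - b)) := by
      apply mul_nonneg (by linarith)
      nlinarith [mul_nonneg hc (mul_pos hA hB).le]
    rw [show (1 + c * x) * (1 + d / (e + b * x))
        = ((1 + c * x) * ((e + b * x) + d)) / (e + b * x) by field_simp,
      show (1 + c * P) * (1 + d / (e + b * P))
        = ((1 + c * P) * ((e + b * P) + d)) / (e + b * P) by field_simp,
      div_le_div_iff₀ hA hB]
    nlinarith [hD]
  · -- convex case
    set g0 := (1 + c * 0) * (1 + d / (e + b * 0)) with hg0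
    set gP := (1 + c * P) * (1 + d / (e + b * P)) with hgP
    have hcoeff1 : 0 ≤ 1 - x / P := by
      rw [sub_nonneg, div_le_one hP]; exact hxP
    have hcoeff2 : 0 ≤ x / P := div_nonneg hx0 hP.le
    have hcombo : (1 + c * x) * (1 + d / (e + b * x)) ≤ (1 - x / P) * g0 + (x / P) * gP := by
      have hD2 : 0 ≤ (P - x) * (P * (x * (b * (d * (b - c * e))))) :=
        mul_nonneg (by linarith)
          (mul_nonneg hP.le (mul_nonneg hx0 (mul_nonneg hb h)))
      have hiden : (1 - x / P) * g0 + (x / P) * gP - (1 + c * x) * (1 + d / (e + b * x))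
          = ((P - x) * (P * (x * (b * (d * (b - c * e))))))
            / (e * ((e + b * x) * ((e + b * P) * P))) := by
        rw [hg0, hgP]
        field_simp
        ring
      have : 0 ≤ (1 - x / P) * g0 + (x / P) * gP - (1 + c * x) * (1 + d / (e + b * x)) := by
        rw [hiden]; positivity
      linarith
    refine hcombo.trans ?_
    have h1 : g0 ≤ max g0 gP := le_max_left _ _
    have h2 : gP ≤ max g0 gP := le_max_right _ _
    nlinarith [mul_le_mul_of_nonneg_left h1 hcoeff1, mul_le_mul_of_nonneg_left h2 hcoeff2]

/-- **Binary power allocation is optimal in the single-hop case.**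
In a two-user single-hop Gaussian interference channel with direct gains
`a₁, a₂ > 0`, cross gains `b₁₂, b₂₁ ≥ 0` and noise `σ² > 0`, the product
`F(p₁,p₂) = (1 + a₁p₁/(σ² + b₂₁p₂))·(1 + a₂p₂/(σ² + b₁₂p₁))` attains its
maximum over the box `[0,P]²` at a corner `(p₁*, p₂*) ∈ {0,P}²`. -/
theorem binary_power_allocation_optimal_single_hop
    (a1 a2 b12 b21 σ2 P : ℝ)
    (ha1 : 0 < a1) (ha2 : 0 < a2) (hb12 : 0 ≤ b12) (hb21 : 0 ≤ b21)
    (hσ2 : 0 < σ2) (hP : 0 < P) :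
    ∃ p1s ∈ ({0, P} : Set ℝ), ∃ p2s ∈ ({0, P} : Set ℝ),
      ∀ p1 ∈ Set.Icc (0 : ℝ) P, ∀ p2 ∈ Set.Icc (0 : ℝ) P,
        (1 + a1 * p1 / (σ2 + b21 * p2)) * (1 + a2 * p2 / (σ2 + b12 * p1)) ≤
          (1 + a1 * p1s / (σ2 + b21 * p2s)) * (1 + a2 * p2s / (σ2 + b12 * p1s)) := by
  set F : ℝ → ℝ → ℝ := fun p q =>
    (1 + a1 * p / (σ2 + b21 * q)) * (1 + a2 * q / (σ2 + b12 * p)) with hF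
  -- Step 1: for fixed p2 in the box, F is maximized over p1 at an endpoint
  have step1 : ∀ p2 ∈ Set.Icc (0 : ℝ) P, ∀ p1 ∈ Set.Icc (0 : ℝ) P,
      F p1 p2 ≤ max (F 0 p2) (F P p2) := by
    rintro p2 ⟨h20, h2P⟩ p1 ⟨h10, h1P⟩
    have hS : 0 < σ2 + b21 * p2 := by nlinarith
    have hkey := key_slice (a1 / (σ2 + b21 * p2)) (a2 * p2) b12 σ2 P
      (by positivity) (mul_nonneg ha2.le h20) hb12 hσ2 hP p1 h10 h1P
    have eq : ∀ x : ℝ, F x p2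
        = (1 + (a1 / (σ2 + b21 * p2)) * x) * (1 + (a2 * p2) / (σ2 + b12 * x)) := by
      intro x; simp only [hF]; ring
    rw [eq p1, eq 0, eq P]
    exact hkey
  -- Step 2: for fixed p1 in the box, F is maximized over p2 at an endpoint
  have step2 : ∀ p1 ∈ Set.Icc (0 : ℝ) P, ∀ p2 ∈ Set.Icc (0 : ℝ) P,
      F p1 p2 ≤ max (F p1 0) (F p1 P) := by
    rintro p1 ⟨h10, h1P⟩ p2 ⟨h20, h2P⟩
    have hS : 0 < σ2 + b12 * p1 := by nlinarith
    have hkey := key_slice (a2 / (σ2 + b12 * p1)) (a1 * p1) b21 σ2 P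
      (by positivity) (mul_nonneg ha1.le h10) hb21 hσ2 hP p2 h20 h2P
    have eq : ∀ y : ℝ, F p1 y
        = (1 + (a2 / (σ2 + b12 * p1)) * y) * (1 + (a1 * p1) / (σ2 + b21 * y)) := by
      intro y; simp only [hF]; ring
    rw [eq p2, eq 0, eq P]
    exact hkey
  have h0m : (0 : ℝ) ∈ ({0, P} : Set ℝ) := by left; rfl
  have hPm : P ∈ ({0, P} : Set ℝ) := by right; rfl
  have h0I : (0 : ℝ) ∈ Set.Icc (0 : ℝ) P := ⟨le_refl _, hP.le⟩
  have hPI : P ∈ Set.Icc (0 : ℝ) P := ⟨hP.le, le_refl _⟩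
  -- pick the best corner
  obtain ⟨p1s, hp1s, p2s, hp2s, hbest⟩ :
      ∃ p1s ∈ ({0, P} : Set ℝ), ∃ p2s ∈ ({0, P} : Set ℝ),
        max (max (F 0 0) (F 0 P)) (max (F P 0) (F P P)) ≤ F p1s p2s := by
    rcases max_choice (max (F 0 0) (F 0 P)) (max (F P 0) (F P P)) with h | h
    · rcases max_choice (F 0 0) (F 0 P) with h' | h'
      · exact ⟨0, h0m, 0, h0m, by rw [h, h']⟩
      · exact ⟨0, h0m, P, hPm, by rw [h, h']⟩
    · rcases max_choice (F P 0) (F P P) with h' | h'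
      · exact ⟨P, hPm, 0, h0m, by rw [h, h']⟩
      · exact ⟨P, hPm, P, hPm, by rw [h, h']⟩
  refine ⟨p1s, hp1s, p2s, hp2s, ?_⟩
  intro p1 hp1 p2 hp2
  have A := step1 p2 hp2 p1 hp1
  have B0 := step2 0 h0I p2 hp2
  have BP := step2 P hPI p2 hp2
  have : F p1 p2 ≤ max (max (F 0 0) (F 0 P)) (max (F P 0) (F P P)) := by
    rcases le_total (F 0 p2) (F P p2) with h | h
    · calc F p1 p2 ≤ max (F 0 p2) (F P p2) := A
        _ = F P p2 := max_eq_right h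
        _ ≤ max (F P 0) (F P P) := BP
        _ ≤ _ := le_max_right _ _
    · calc F p1 p2 ≤ max (F 0 p2) (F P p2) := A
        _ = F 0 p2 := max_eq_left h
        _ ≤ max (F 0 0) (F 0 P) := B0
        _ ≤ _ := le_max_left _ _
  exact this.trans hbest
end

section
/- Consider a two-user decode-and-forward relay network with L ≥ 1 hops and a fixed relay assignment. For i ∈ {1,2} and l ∈ {0,…,L−1}, user i transmits in hop l with power pᵢ(l) ∈ [0,P], where P > 0. For l ∈ {1,…,L}, with direct channel power gains hᵢ(l) > 0, cross-channel power gains g_{ji}(l) ≥ 0 (j ≠ i), and noise power σ² > 0, the SINR of user i in hop l is γᵢ(l) = pᵢ(l−1)·hᵢ(l)/(σ² + p_j(l−1)·g_{ji}(l)), and the achievable sum-rate is R(p₁,p₂) = log₂(1 + min_{1≤l≤L} γ₁(l)) + log₂(1 + min_{1≤l≤L} γ₂(l)). Then the supremum of R over all allocations in [0,P]^L × [0,P]^L equals the supremum of log₂((1 + γ₁(1))·(1 + γ₂(1))) over those allocations in [0,P]^L × [0,P]^L that additionally satisfy the equal per-hop SINR constraints γ₁(l) = γ₁(1) and γ₂(l)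 = γ₂(1) for all l ∈ {1,…,L}. -/


lemma exists_matching (σ2 h1 h2 g1 g2 p1 p2 a1 a2 : ℝ)
    (hσ : 0 < σ2) (hh1 : 0 < h1) (hh2 : 0 < h2) (hg1 : 0 ≤ g1) (hg2 : 0 ≤ g2)
    (hp1 : 0 ≤ p1) (hp2 : 0 ≤ p2) (ha1 : 0 ≤ a1) (ha2 : 0 ≤ a2)
    (H1 : a1 * (σ2 + p2 * g1) ≤ p1 * h1)
    (H2 : a2 * (σ2 + p1 * g2) ≤ p2 * h2) :
    ∃ x y, 0 ≤ x ∧ x ≤ p1 ∧ 0 ≤ y ∧ y ≤ p2 ∧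
      x * h1 = a1 * (σ2 + y * g1) ∧ y * h2 = a2 * (σ2 + x * g2) := by
  have hD : a1 * a2 * g1 * g2 < h1 * h2 := by
    by_contra hc
    push_neg at hc
    rcases ha1.lt_or_eq with ha1' | ha1'
    · nlinarith [mul_le_mul_of_nonneg_right H1 hh2.le,
        mul_le_mul_of_nonneg_left H2 (mul_nonneg ha1 hg1),
        mul_le_mul_of_nonneg_right hc hp1,
        mul_pos (mul_pos ha1' hσ) hh2,
        mul_nonneg (mul_nonneg (mul_nonneg ha1 ha2) hg1) hσ.le]
    · rw [← ha1'] at hc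
      nlinarith [mul_pos hh1 hh2]
  set D := h1 * h2 - a1 * a2 * g1 * g2 with hDdef
  have hDpos : 0 < D := by simp [hDdef]; linarith
  set x := a1 * (σ2 * h2 + a2 * σ2 * g1) / D with hxdef
  set y := a2 * (σ2 + x * g2) / h2 with hydef
  have hx0 : 0 ≤ x := by
    apply div_nonneg _ hDpos.le
    have : 0 ≤ σ2 * h2 + a2 * σ2 * g1 := by positivity
    positivity
  have hx1 : x ≤ p1 := by
    rw [hxdef, div_le_iff₀ hDpos]
    nlinarith [mul_nonneg ha1 hg1, mul_nonneg (mul_nonneg ha1 hg1) hh2.le]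
  have hy0 : 0 ≤ y := by
    apply div_nonneg _ hh2.le
    have : 0 ≤ x * g2 := mul_nonneg hx0 hg2
    positivity
  have hy1 : y ≤ p2 := by
    rw [hydef, div_le_iff₀ hh2]
    have : a2 * (σ2 + x * g2) ≤ a2 * (σ2 + p1 * g2) := by
      apply mul_le_mul_of_nonneg_left _ ha2
      have := mul_le_mul_of_nonneg_right hx1 hg2
      linarith
    linarith
  refine ⟨x, y, hx0, hx1, hy0, hy1, ?_, ?_⟩
  · rw [hydef]
    field_simp [hxdef]
    have hxD : x * D = a1 * (σ2 * h2 + a2 * σ2 * g1) := by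
      rw [hxdef, div_mul_cancel₀ _ hDpos.ne']
    rw [hDdef] at hxD
    linear_combination hxD
  · rw [hydef]
    field_simp

/-- **SINR-matching reformulation (equation (11)).**
In a two-user decode-and-forward network with `L ≥ 1` hops, positive direct
gains, nonnegative cross gains, `σ² > 0` and `P > 0`, the supremum of the
achievable sum-rate over the power box `[0,P]^{2×L}` equals the supremum of
`log₂((1 + γ₁(1))·(1 + γ₂(1)))` over those allocations in the box whose
per-hop SINRs are equal across all hops for each user. -/
theorem sumRate_sup_eq_equalSINR_sup
    (L : ℕ) (hL : 1 ≤ L) (σ2 P : ℝ) (hσ2 : 0 < σ2) (hP : 0 < P)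
    (h g : Fin 2 → Fin L → ℝ)
    (hh : ∀ i l, 0 < h i l) (hg : ∀ i l, 0 ≤ g i l) :
    sSup (twoUserSumRate L σ2 h g ''
        {p | ∀ i l, p i l ∈ Set.Icc (0 : ℝ) P}) =
    sSup ((fun p => Real.logb 2
          ((1 + twoUserSINR L σ2 h g p 0 ⟨0, hL⟩) *
           (1 + twoUserSINR L σ2 h g p 1 ⟨0, hL⟩))) ''
        {p | (∀ i l, p i l ∈ Set.Icc (0 : ℝ) P) ∧
          (∀ i l, twoUserSINR L σ2 h g p i l =
            twoUserSINR L σ2 h g p i ⟨0, hL⟩)}) := by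
  have hNE : Nonempty (Fin L) := ⟨⟨0, hL⟩⟩
  have e0 : ((0 : Fin 2) + 1) = 1 := rfl
  have e1 : ((1 : Fin 2) + 1) = 0 := rfl
  -- denominators positive and SINR nonneg for box points
  have denom_pos : ∀ (p : Fin 2 → Fin L → ℝ),
      (∀ i l, p i l ∈ Set.Icc (0 : ℝ) P) →
      ∀ (i : Fin 2) (l : Fin L), 0 < σ2 + p (i + 1) l * g i l := by
    intro p hp i l
    have := (hp (i + 1) l).1
    have := hg i l
    nlinarith
  have sinr_nonneg : ∀ (p : Fin 2 → Fin L → ℝ),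
      (∀ i l, p i l ∈ Set.Icc (0 : ℝ) P) →
      ∀ (i : Fin 2) (l : Fin L), 0 ≤ twoUserSINR L σ2 h g p i l := by
    intro p hp i l
    exact div_nonneg (mul_nonneg (hp i l).1 (hh i l).le) (denom_pos p hp i l).le
  congr 1
  ext r
  simp only [Set.mem_image, Set.mem_setOf_eq]
  constructor
  · rintro ⟨p, hp, rfl⟩
    set γ := twoUserSINR L σ2 h g p with hγ
    set a : Fin 2 → ℝ := fun i => ⨅ l, γ i l with ha
    have ha_nonneg : ∀ i, 0 ≤ a i := fun i =>
      le_ciInf fun l => sinr_nonneg p hp i l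
    have ha_le : ∀ i l, a i ≤ γ i l := fun i l =>
      ciInf_le ((Set.finite_range _).bddBelow) l
    have key : ∀ i l, a i * (σ2 + p (i + 1) l * g i l) ≤ p i l * h i l := by
      intro i l
      have hd := denom_pos p hp i l
      have := ha_le i l
      rw [hγ, twoUserSINR, le_div_iff₀ hd] at this
      exact this
    have hex : ∀ l : Fin L, ∃ x y, 0 ≤ x ∧ x ≤ p 0 l ∧ 0 ≤ y ∧ y ≤ p 1 l ∧
        x * h 0 l = a 0 * (σ2 + y * g 0 l) ∧
        y * h 1 l = a 1 * (σ2 + x * g 1 l) := by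
      intro l
      have H1 := key 0 l
      have H2 := key 1 l
      rw [e0] at H1
      rw [e1] at H2
      exact exists_matching σ2 (h 0 l) (h 1 l) (g 0 l) (g 1 l) (p 0 l) (p 1 l)
        (a 0) (a 1) hσ2 (hh 0 l) (hh 1 l) (hg 0 l) (hg 1 l)
        (hp 0 l).1 (hp 1 l).1 (ha_nonneg 0) (ha_nonneg 1) H1 H2
    choose x y hx0 hx1 hy0 hy1 heqx heqy using hex
    set q : Fin 2 → Fin L → ℝ := ![x, y] with hq
    have hq0 : ∀ l, q 0 l = x l := fun l => rfl
    have hq1 : ∀ l, q 1 l = y l := fun l => rfl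
    have hqbox : ∀ i l, q i l ∈ Set.Icc (0 : ℝ) P := by
      intro i l
      fin_cases i
      · exact ⟨hx0 l, le_trans (hx1 l) (hp 0 l).2⟩
      · exact ⟨hy0 l, le_trans (hy1 l) (hp 1 l).2⟩
    have hsinr0 : ∀ l, twoUserSINR L σ2 h g q 0 l = a 0 := by
      intro l
      have hd : (0:ℝ) < σ2 + y l * g 0 l := by
        have := denom_pos q hqbox 0 l
        simpa [e0, hq1] using this
      show x l * h 0 l / (σ2 + y l * g 0 l) = a 0
      rw [div_eq_iff hd.ne']
      exact heqx l
    have hsinr1 : ∀ l, twoUserSINR L σ2 h g q 1 l = a 1 := by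
      intro l
      have hd : (0:ℝ) < σ2 + x l * g 1 l := by
        have := denom_pos q hqbox 1 l
        simpa [e1, hq0] using this
      show y l * h 1 l / (σ2 + x l * g 1 l) = a 1
      rw [div_eq_iff hd.ne']
      exact heqy l
    have hsinr : ∀ i l, twoUserSINR L σ2 h g q i l = a i := by
      intro i l
      match i with
      | 0 => exact hsinr0 l
      | 1 => exact hsinr1 l
    refine ⟨q, ⟨hqbox, fun i l => by rw [hsinr i l, hsinr i ⟨0, hL⟩]⟩, ?_⟩
    rw [hsinr 0 ⟨0, hL⟩, hsinr 1 ⟨0, hL⟩]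
    have h1 : (0:ℝ) < 1 + a 0 := by have := ha_nonneg 0; linarith
    have h2 : (0:ℝ) < 1 + a 1 := by have := ha_nonneg 1; linarith
    rw [Real.logb_mul h1.ne' h2.ne', twoUserSumRate, Fin.sum_univ_two]
  · rintro ⟨p, ⟨hp, heq⟩, rfl⟩
    refine ⟨p, hp, ?_⟩
    have hconst : ∀ i : Fin 2, (⨅ l, twoUserSINR L σ2 h g p i l) =
        twoUserSINR L σ2 h g p i ⟨0, hL⟩ := by
      intro i
      have : (fun l => twoUserSINR L σ2 h g p i l) =
          fun _ => twoUserSINR L σ2 h g p i ⟨0, hL⟩ := funext (heq i)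
      rw [this, ciInf_const]
    have h1 : (0:ℝ) < 1 + twoUserSINR L σ2 h g p 0 ⟨0, hL⟩ := by
      have := sinr_nonneg p hp 0 ⟨0, hL⟩; linarith
    have h2 : (0:ℝ) < 1 + twoUserSINR L σ2 h g p 1 ⟨0, hL⟩ := by
      have := sinr_nonneg p hp 1 ⟨0, hL⟩; linarith
    rw [twoUserSumRate, Fin.sum_univ_two, hconst 0, hconst 1,
      Real.logb_mul h1.ne' h2.ne']
end
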